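/- Let χ : ℝ → ℝ be twice continuously differentiable with χ(s) = 0 for s ≥ −1 and χ(s) = 1 for s ≤ −2, and let a₀ ∈ (0,1). There exists a constant C > 0, depending only on χ and a₀, such that for every p ∈ ℕ*, every a ∈ [a₀, 1), and every α with 0 < 2α ≤ a₀, the function Ψ(a,x) = √(2/a)·sin(pπx/a)·χ_α(x−a) (extended by the same formula for x ∈ [0,1], with χ_α(s) = χ(s/α)) satisfies ( ∫₀¹ |∂_a Ψ(a,x)|² dx )^{1/2} ≤ C·p. (Hence if the wall position a(t) moves with speed |a'(t)| ≤ κ, the time derivative of the moving truncated mode ψ_k^{a(t)} has L² norm O(p·κ).) -/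

import Mathlib

open Real

/-- Uniform `L²` bound on the `a`-derivative of the moving truncated eigenmode
`Ψ(a,x) = √(2/a)·sin(pπx/a)·χ((x-a)/α)`: there is `C = C(χ, a₀) > 0` with
`‖∂_a Ψ(a,·)‖_{L²(0,1)} ≤ C·p` for all `p ∈ ℕ*`, `a ∈ [a₀,1)`, `0 < 2α ≤ a₀`. -/
theorem stmt_12
    (χ : ℝ → ℝ) (hχ : ContDiff ℝ 2 χ)
    (hχ0 : ∀ s : ℝ, -1 ≤ s → χ s = 0)
    (hχ1 : ∀ s : ℝ, s ≤ -2 → χ s = 1)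
    (a₀ : ℝ) (ha₀ : a₀ ∈ Set.Ioo (0 : ℝ) 1) :
    ∃ C : ℝ, 0 < C ∧
      ∀ p : ℕ, 0 < p → ∀ a : ℝ, a ∈ Set.Ico a₀ 1 → ∀ α : ℝ, 0 < α → 2 * α ≤ a₀ →
        Real.sqrt (∫ x in (0 : ℝ)..1,
            (deriv (fun a' : ℝ =>
              Real.sqrt (2 / a') * Real.sin (p * Real.pi * x / a') * χ ((x - a') / α)) a) ^ 2) ≤
          C * p := by
  obtain ⟨ha₀0, ha₀1⟩ := ha₀
  have hπ := Real.pi_pos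
  -- global bound on χ
  obtain ⟨B₀, hB₀⟩ : ∃ B, ∀ x ∈ Set.Icc (-2:ℝ) (-1), ‖χ x‖ ≤ B :=
    isCompact_Icc.exists_bound_of_continuousOn hχ.continuous.continuousOn
  set M₀ : ℝ := max B₀ 1 with hM₀def
  have hM₀1 : (1:ℝ) ≤ M₀ := le_max_right _ _
  have hM₀0 : (0:ℝ) ≤ M₀ := by linarith
  have hM₀ : ∀ s, |χ s| ≤ M₀ := by
    intro s
    rcases le_or_gt (-1:ℝ) s with h | h
    · rw [hχ0 s h]; simpa using hM₀0
    rcases le_or_gt s (-2:ℝ) with h' | h'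
    · rw [hχ1 s h']; simpa using hM₀1
    · exact (hB₀ s ⟨h'.le, h.le⟩).trans (le_max_left _ _)
  -- global bound on deriv χ
  have hdχc : Continuous (deriv χ) := hχ.continuous_deriv one_le_two
  obtain ⟨B₁, hB₁⟩ : ∃ B, ∀ x ∈ Set.Icc (-2:ℝ) (-1), ‖deriv χ x‖ ≤ B :=
    isCompact_Icc.exists_bound_of_continuousOn hdχc.continuousOn
  have hd0 : ∀ s : ℝ, -1 < s → deriv χ s = 0 := by
    intro s hs
    have he : χ =ᶠ[nhds s] fun _ => 0 := by
      filter_upwards [Ioi_mem_nhds hs] with t ht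
      exact hχ0 t (le_of_lt ht)
    rw [he.deriv_eq, deriv_const]
  have hd1 : ∀ s : ℝ, s < -2 → deriv χ s = 0 := by
    intro s hs
    have he : χ =ᶠ[nhds s] fun _ => 1 := by
      filter_upwards [Iio_mem_nhds hs] with t ht
      exact hχ1 t (le_of_lt ht)
    rw [he.deriv_eq, deriv_const]
  set M₁ : ℝ := max B₁ 0 with hM₁def
  have hM₁0 : (0:ℝ) ≤ M₁ := le_max_right _ _
  have hM₁ : ∀ s, |deriv χ s| ≤ M₁ := by
    intro s
    rcases lt_or_ge (-1:ℝ) s with h | h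
    · rw [hd0 s h]; simpa using hM₁0
    rcases lt_or_ge s (-2:ℝ) with h' | h'
    · rw [hd1 s h']; simpa using hM₁0
    · exact (hB₁ s ⟨h', h⟩).trans (le_max_left _ _)
  -- the constant
  set K : ℝ := Real.sqrt (2/a₀) with hKdef
  have hK0 : 0 ≤ K := Real.sqrt_nonneg _
  set C : ℝ := M₀/a₀^2 + K*π*M₀/a₀^2 + 2*π*K*M₁/a₀ + 1 with hCdef
  have ht1 : 0 ≤ M₀/a₀^2 := div_nonneg hM₀0 (sq_nonneg _)
  have ht2 : 0 ≤ K*π*M₀/a₀^2 := div_nonneg (mul_nonneg (mul_nonneg hK0 hπ.le) hM₀0) (sq_nonneg _)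
  have ht3 : 0 ≤ 2*π*K*M₁/a₀ :=
    div_nonneg (mul_nonneg (mul_nonneg (by positivity) hK0) hM₁0) ha₀0.le
  have hC0 : 0 < C := by rw [hCdef]; linarith
  refine ⟨C, hC0, ?_⟩
  intro p hp a ha α hα h2α
  have hp1 : (1:ℝ) ≤ (p:ℝ) := by exact_mod_cast hp
  have hp0 : (0:ℝ) ≤ (p:ℝ) := by linarith
  have ha0 : 0 < a := lt_of_lt_of_le ha₀0 ha.1
  have ha1 : a < 1 := ha.2
  have h2a : (2:ℝ)/a ≠ 0 := by positivity
  have hs10 : 0 ≤ Real.sqrt (2/a) := Real.sqrt_nonneg _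
  have hs11 : 1 ≤ Real.sqrt (2/a) := by
    rw [show (1:ℝ) = Real.sqrt 1 from (Real.sqrt_one).symm]
    exact Real.sqrt_le_sqrt ((one_le_div ha0).mpr (by linarith))
  have hs1K : Real.sqrt (2/a) ≤ K := by
    rw [hKdef]
    exact Real.sqrt_le_sqrt (div_le_div_of_nonneg_left (by norm_num) ha₀0 ha.1)
  -- explicit derivative
  set D : ℝ → ℝ := fun x =>
    (1/(2*Real.sqrt (2/a)) * ((0*a - 2*1)/a^2) * Real.sin (↑p*π*x/a) +
      Real.sqrt (2/a) * (Real.cos (↑p*π*x/a) * ((0*a - ↑p*π*x*1)/a^2))) * χ ((x-a)/α) +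
    Real.sqrt (2/a) * Real.sin (↑p*π*x/a) * (deriv χ ((x-a)/α) * ((0-1)/α)) with hDdef
  have hD : ∀ x : ℝ, HasDerivAt (fun a' : ℝ =>
      Real.sqrt (2 / a') * Real.sin (↑p * π * x / a') * χ ((x - a') / α)) (D x) a := by
    intro x
    have hinner1 : HasDerivAt (fun a' : ℝ => 2/a') ((0*a - 2*1)/a^2) a :=
      (hasDerivAt_const a (2:ℝ)).div (hasDerivAt_id a) ha0.ne'
    have hsq : HasDerivAt (fun a' : ℝ => Real.sqrt (2/a'))
        (1/(2*Real.sqrt (2/a)) * ((0*a - 2*1)/a^2)) a :=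
      (Real.hasDerivAt_sqrt h2a).comp a hinner1
    have hinner2 : HasDerivAt (fun a' : ℝ => ↑p*π*x/a') ((0*a - ↑p*π*x*1)/a^2) a :=
      (hasDerivAt_const a ((p:ℝ)*π*x)).div (hasDerivAt_id a) ha0.ne'
    have hsin : HasDerivAt (fun a' : ℝ => Real.sin (↑p*π*x/a'))
        (Real.cos (↑p*π*x/a) * ((0*a - ↑p*π*x*1)/a^2)) a :=
      (Real.hasDerivAt_sin _).comp a hinner2
    have hinner3 : HasDerivAt (fun a' : ℝ => (x - a')/α) ((0-1)/α) a :=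
      ((hasDerivAt_const a x).sub (hasDerivAt_id a)).div_const α
    have hcut : HasDerivAt (fun a' : ℝ => χ ((x - a')/α))
        (deriv χ ((x-a)/α) * ((0-1)/α)) a :=
      ((hχ.differentiable two_ne_zero).differentiableAt.hasDerivAt).comp a hinner3
    exact (hsq.mul hsin).mul hcut
  -- pointwise bound
  have key : ∀ x ∈ Set.Icc (0:ℝ) 1, |D x| ≤ C * p := by
    intro x hx
    have hsv : |Real.sin (↑p*π*x/a)| ≤ 1 :=
      abs_le.mpr ⟨Real.neg_one_le_sin _, Real.sin_le_one _⟩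
    have hcv : |Real.cos (↑p*π*x/a)| ≤ 1 :=
      abs_le.mpr ⟨Real.neg_one_le_cos _, Real.cos_le_one _⟩
    -- term A
    have hA : |1/(2*Real.sqrt (2/a)) * ((0*a - 2*1)/a^2) * Real.sin (↑p*π*x/a)| ≤ 1/a₀^2 := by
      have h1 : |1/(2*Real.sqrt (2/a))| ≤ 1/2 := by
        rw [abs_of_nonneg (by positivity)]
        exact one_div_le_one_div_of_le two_pos (by linarith)
      have h2 : |(0*a - 2*1)/a^2| ≤ 2/a₀^2 := by
        rw [show (0*a - 2*1 : ℝ)/a^2 = -(2/a^2) by ring, abs_neg,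
          abs_of_nonneg (by positivity)]
        exact div_le_div_of_nonneg_left (by norm_num) (by positivity)
          (pow_le_pow_left₀ ha₀0.le ha.1 2)
      calc |1/(2*Real.sqrt (2/a)) * ((0*a - 2*1)/a^2) * Real.sin (↑p*π*x/a)|
          = |1/(2*Real.sqrt (2/a))| * |(0*a - 2*1)/a^2| * |Real.sin (↑p*π*x/a)| := by
            rw [abs_mul, abs_mul]
        _ ≤ (1/2) * (2/a₀^2) * 1 := by
            apply mul_le_mul _ hsv (abs_nonneg _) (by positivity)
            exact mul_le_mul h1 h2 (abs_nonneg _) (by norm_num)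
        _ = 1/a₀^2 := by ring
    -- term B
    have hB : |Real.sqrt (2/a) * (Real.cos (↑p*π*x/a) * ((0*a - ↑p*π*x*1)/a^2))|
        ≤ K * (↑p*π/a₀^2) := by
      have he2 : |(0*a - ↑p*π*x*1)/a^2| ≤ ↑p*π/a₀^2 := by
        rw [show (0*a - ↑p*π*x*1 : ℝ)/a^2 = -(↑p*π*x/a^2) by ring, abs_neg,
          abs_of_nonneg (div_nonneg (mul_nonneg (by positivity) hx.1) (sq_nonneg a))]
        calc (↑p*π*x)/a^2 ≤ (↑p*π*1)/a₀^2 := by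
              apply div_le_div₀ (by positivity) _ (by positivity)
                (pow_le_pow_left₀ ha₀0.le ha.1 2)
              exact mul_le_mul_of_nonneg_left hx.2 (by positivity)
          _ = ↑p*π/a₀^2 := by ring
      calc |Real.sqrt (2/a) * (Real.cos (↑p*π*x/a) * ((0*a - ↑p*π*x*1)/a^2))|
          = |Real.sqrt (2/a)| * (|Real.cos (↑p*π*x/a)| * |(0*a - ↑p*π*x*1)/a^2|) := by
            rw [abs_mul, abs_mul]
        _ ≤ K * (1 * (↑p*π/a₀^2)) := by
            apply mul_le_mul _ _ (by positivity) hK0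
            · rwa [abs_of_nonneg hs10]
            · exact mul_le_mul hcv he2 (abs_nonneg _) (by norm_num)
        _ = K * (↑p*π/a₀^2) := by ring
    -- term T (the cutoff derivative term)
    have hT : |Real.sqrt (2/a) * Real.sin (↑p*π*x/a) * (deriv χ ((x-a)/α) * ((0-1)/α))|
        ≤ 2*↑p*π*K*M₁/a₀ := by
      have hTnn : (0:ℝ) ≤ 2*↑p*π*K*M₁/a₀ :=
        div_nonneg (mul_nonneg (mul_nonneg (by positivity) hK0) hM₁0) ha₀0.le
      rcases lt_or_ge (a - α) x with hc1 | hc1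
      · have hz : deriv χ ((x-a)/α) = 0 := by
          apply hd0
          rw [lt_div_iff₀ hα]; linarith
        rw [hz]; simpa using hTnn
      rcases lt_or_ge x (a - 2*α) with hc2 | hc2
      · have hz : deriv χ ((x-a)/α) = 0 := by
          apply hd1
          rw [div_lt_iff₀ hα]; linarith
        rw [hz]; simpa using hTnn
      · -- middle region : a - 2α ≤ x ≤ a - α
        have hsinb : |Real.sin (↑p*π*x/a)| ≤ ↑p*π*(2*α)/a₀ := by
          have e1 := Real.sin_add_nat_mul_pi (↑p*π*x/a - ↑p*π) p
          have e2 : ↑p*π*x/a - ↑p*π + ↑p*π = ↑p*π*x/a := by ring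
          rw [e2] at e1
          rw [e1, abs_mul, abs_pow, abs_neg, abs_one, one_pow, one_mul]
          calc |Real.sin (↑p*π*x/a - ↑p*π)| ≤ |↑p*π*x/a - ↑p*π| := Real.abs_sin_le_abs
            _ = (↑p*π/a) * |x - a| := by
                rw [show ↑p*π*x/a - ↑p*π = (↑p*π/a)*(x-a) by field_simp, abs_mul,
                  abs_of_nonneg (by positivity)]
            _ ≤ (↑p*π/a₀) * (2*α) := by
                apply mul_le_mul
                · exact div_le_div_of_nonneg_left (by positivity) ha₀0 ha.1
                · exact abs_le.mpr ⟨by linarith, by linarith⟩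
                · exact abs_nonneg _
                · positivity
            _ = ↑p*π*(2*α)/a₀ := by ring
        have hdvb : |deriv χ ((x-a)/α) * ((0-1)/α)| ≤ M₁ * (1/α) := by
          rw [abs_mul]
          apply mul_le_mul (hM₁ _) _ (abs_nonneg _) hM₁0
          rw [show ((0-1:ℝ)/α) = -(1/α) by ring, abs_neg, abs_of_nonneg (by positivity)]
        calc |Real.sqrt (2/a) * Real.sin (↑p*π*x/a) * (deriv χ ((x-a)/α) * ((0-1)/α))|
            = |Real.sqrt (2/a)| * |Real.sin (↑p*π*x/a)| * |deriv χ ((x-a)/α) * ((0-1)/α)| := by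
              rw [abs_mul, abs_mul]
          _ ≤ K * (↑p*π*(2*α)/a₀) * (M₁ * (1/α)) := by
              apply mul_le_mul _ hdvb (abs_nonneg _) (by positivity)
              apply mul_le_mul _ hsinb (abs_nonneg _) hK0
              rwa [abs_of_nonneg hs10]
          _ = 2*↑p*π*K*M₁/a₀ := by field_simp
    -- assemble
    have hsum : |D x| ≤ (1/a₀^2 + K * (↑p*π/a₀^2)) * M₀ + 2*↑p*π*K*M₁/a₀ := by
      rw [hDdef]
      calc |(1/(2*Real.sqrt (2/a)) * ((0*a - 2*1)/a^2) * Real.sin (↑p*π*x/a) +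
              Real.sqrt (2/a) * (Real.cos (↑p*π*x/a) * ((0*a - ↑p*π*x*1)/a^2))) * χ ((x-a)/α) +
            Real.sqrt (2/a) * Real.sin (↑p*π*x/a) * (deriv χ ((x-a)/α) * ((0-1)/α))|
          ≤ |(1/(2*Real.sqrt (2/a)) * ((0*a - 2*1)/a^2) * Real.sin (↑p*π*x/a) +
              Real.sqrt (2/a) * (Real.cos (↑p*π*x/a) * ((0*a - ↑p*π*x*1)/a^2))) * χ ((x-a)/α)| +
            |Real.sqrt (2/a) * Real.sin (↑p*π*x/a) * (deriv χ ((x-a)/α) * ((0-1)/α))| :=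
            abs_add_le _ _
        _ ≤ (1/a₀^2 + K * (↑p*π/a₀^2)) * M₀ + 2*↑p*π*K*M₁/a₀ := by
            apply add_le_add _ hT
            rw [abs_mul]
            apply mul_le_mul _ (hM₀ _) (abs_nonneg _) (by positivity)
            exact (abs_add_le _ _).trans (add_le_add hA hB)
    have hfin : (1/a₀^2 + K * (↑p*π/a₀^2)) * M₀ + 2*↑p*π*K*M₁/a₀ ≤ C * ↑p := by
      rw [hCdef]
      have h1 : M₀/a₀^2 ≤ ↑p*(M₀/a₀^2) := le_mul_of_one_le_left ht1 hp1
      have h2 : (1/a₀^2 + K * (↑p*π/a₀^2)) * M₀ = M₀/a₀^2 + ↑p*(K*π*M₀/a₀^2) := by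
        field_simp
      have h3 : 2*↑p*π*K*M₁/a₀ = ↑p*(2*π*K*M₁/a₀) := by ring
      have h4 : (M₀/a₀^2 + K*π*M₀/a₀^2 + 2*π*K*M₁/a₀ + 1) * (p:ℝ)
          = ↑p*(M₀/a₀^2) + ↑p*(K*π*M₀/a₀^2) + ↑p*(2*π*K*M₁/a₀) + ↑p := by ring
      rw [h2, h3, h4]
      linarith [h1, hp1]
    exact hsum.trans hfin
  -- continuity of D
  have harg : Continuous fun x : ℝ => ↑p*π*x/a := by fun_prop
  have hlin : Continuous fun x : ℝ => (x - a)/α := by fun_prop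
  have hDc : Continuous D := by
    rw [hDdef]
    apply Continuous.add
    · apply Continuous.mul
      · apply Continuous.add
        · exact continuous_const.mul (Real.continuous_sin.comp harg)
        · exact continuous_const.mul ((Real.continuous_cos.comp harg).mul (by fun_prop))
      · exact hχ.continuous.comp hlin
    · exact (continuous_const.mul (Real.continuous_sin.comp harg)).mul
        ((hdχc.comp hlin).mul continuous_const)
  -- integral bound
  have hIeq : (∫ x in (0:ℝ)..1,
      (deriv (fun a' : ℝ =>
        Real.sqrt (2 / a') * Real.sin (↑p * π * x / a') * χ ((x - a') / α)) a) ^ 2)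
      = ∫ x in (0:ℝ)..1, (D x)^2 :=
    intervalIntegral.integral_congr fun x _ => by rw [(hD x).deriv]
  have hint : IntervalIntegrable (fun x => (D x)^2) MeasureTheory.volume 0 1 :=
    (hDc.pow 2).intervalIntegrable 0 1
  have hmono : (∫ x in (0:ℝ)..1, (D x)^2) ≤ ∫ _x in (0:ℝ)..1, (C*↑p)^2 :=
    intervalIntegral.integral_mono_on zero_le_one hint intervalIntegrable_const
      (fun x hx => by
        calc (D x)^2 = |D x|^2 := (sq_abs _).symm
          _ ≤ (C*↑p)^2 := pow_le_pow_left₀ (abs_nonneg _) (key x hx) 2)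
  have hCp : 0 ≤ C*(p:ℝ) := mul_nonneg hC0.le hp0
  calc Real.sqrt (∫ x in (0:ℝ)..1,
        (deriv (fun a' : ℝ =>
          Real.sqrt (2 / a') * Real.sin (↑p * π * x / a') * χ ((x - a') / α)) a) ^ 2)
      = Real.sqrt (∫ x in (0:ℝ)..1, (D x)^2) := by rw [hIeq]
    _ ≤ Real.sqrt ((C*↑p)^2) := Real.sqrt_le_sqrt (by simpa using hmono)
    _ = C*↑p := Real.sqrt_sq hCp
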